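/- Let X and Y be real normed vector spaces and let P : X → Y be a compact linear operator, i.e. a continuous linear map sending bounded subsets of X to precompact subsets of Y. Then the dual (adjoint) map P* : Y* → X*, defined by P*(y*) = y* ∘ P, is a compact linear operator between the dual spaces Y* and X* equipped with their operator norms. -/

import Mathlib

/-- If `P : X → Y` is a compact continuous linear operator between real normed
spaces (bounded sets are mapped to totally bounded sets), then the dual map
`P* : Y* → X*`, `y* ↦ y* ∘ P`, is a compact linear operator between the dual
spaces equipped with their operator norms. -/
theorem dual_compactness
    {X Y : Type*} [NormedAddCommGroup X] [NormedSpace ℝ X]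
    [NormedAddCommGroup Y] [NormedSpace ℝ Y]
    (P : X →L[ℝ] Y)
    (hP : ∀ s : Set X, Bornology.IsBounded s → TotallyBounded (P '' s)) :
    ∀ t : Set (Y →L[ℝ] ℝ), Bornology.IsBounded t →
      TotallyBounded ((fun ystar : Y →L[ℝ] ℝ => ystar.comp P) '' t) := by
  intro t ht
  rw [Metric.totallyBounded_iff]
  intro ε hε
  -- bound on t
  obtain ⟨M, hM⟩ := isBounded_iff_forall_norm_le.1 ht
  set M' : ℝ := max M 1 with hM'def
  have hM'pos : 0 < M' := lt_of_lt_of_le one_pos (le_max_right _ _)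
  have hM'le : ∀ f ∈ t, ‖f‖ ≤ M' := fun f hf => (hM f hf).trans (le_max_left _ _)
  set δ : ℝ := ε / (4 * M') with hδdef
  have hδpos : 0 < δ := div_pos hε (by positivity)
  -- finite δ-net F for P '' (closed unit ball)
  have hPB : TotallyBounded (P '' Metric.closedBall 0 1) :=
    hP _ Metric.isBounded_closedBall
  obtain ⟨F, hFfin, hFcov⟩ := Metric.totallyBounded_iff.1 hPB δ hδpos
  -- bound on norms of elements of F
  obtain ⟨C, hC⟩ := isBounded_iff_forall_norm_le.1 hFfin.isBounded
  -- consider the restriction map to F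
  haveI : Fintype F := hFfin.fintype
  set Φ : (Y →L[ℝ] ℝ) → (F → ℝ) := fun f y => f y.1 with hΦdef
  have hΦbdd : Bornology.IsBounded (Φ '' t) := by
    rw [isBounded_iff_forall_norm_le]
    refine ⟨M' * (max C 0), ?_⟩
    rintro _ ⟨f, hf, rfl⟩
    rcases isEmpty_or_nonempty F with h | h
    · have h0 : Φ f = 0 := Subsingleton.elim _ _
      rw [h0, norm_zero]; positivity
    refine (pi_norm_le_iff_of_nonneg (by positivity)).2 fun y => ?_
    calc ‖f y.1‖ ≤ ‖f‖ * ‖y.1‖ := f.le_opNorm _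
      _ ≤ M' * max C 0 := by
          apply mul_le_mul (hM'le f hf) ((hC y.1 y.2).trans (le_max_left _ _))
            (norm_nonneg _) hM'pos.le
  have hΦtb : TotallyBounded (Φ '' t) :=
    (hΦbdd.isCompact_closure.totallyBounded).subset subset_closure
  obtain ⟨s, hst, hsfin, hscov⟩ :=
    Metric.finite_approx_of_totallyBounded hΦtb (ε/4) (by positivity)
  -- choose preimages in t of points of s
  choose g hg hΦg using fun p (hp : p ∈ s) => hst hp
  -- the finite candidate net
  classical
  refine ⟨(fun p : F → ℝ => if hp : p ∈ s then (g p hp).comp P else 0) '' s,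
    hsfin.image _, ?_⟩
  rintro _ ⟨f, hf, rfl⟩
  obtain ⟨p, hpmem, hpball⟩ := Set.mem_iUnion₂.1 (hscov ⟨f, hf, rfl⟩)
  refine Set.mem_iUnion₂.2 ⟨_, Set.mem_image_of_mem _ hpmem, ?_⟩
  rw [dif_pos hpmem]
  set g₀ := g p hpmem with hg₀
  rw [Metric.mem_ball, dist_eq_norm]
  have key : ‖f.comp P - g₀.comp P‖ ≤ 3 * (ε/4) := by
    apply ContinuousLinearMap.opNorm_le_of_unit_norm (by positivity)
    intro x hx
    have hxball : P x ∈ P '' Metric.closedBall 0 1 :=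
      ⟨x, by simp [hx.le, Metric.mem_closedBall, dist_zero_right, hx], rfl⟩
    obtain ⟨y, hyF, hyδ⟩ := Set.mem_iUnion₂.1 (hFcov hxball)
    have hd : dist (P x) y ≤ δ := (Metric.mem_ball.1 hyδ).le
    have h1 : ‖f (P x) - f y‖ ≤ ε/4 := by
      calc ‖f (P x) - f y‖ = ‖f (P x - y)‖ := by rw [map_sub]
        _ ≤ ‖f‖ * ‖P x - y‖ := f.le_opNorm _
        _ ≤ M' * δ := by
            apply mul_le_mul (hM'le f hf) (by rwa [← dist_eq_norm]) (norm_nonneg _)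
              hM'pos.le
        _ = ε/4 := by rw [hδdef]; field_simp
    have h3 : ‖g₀ y - g₀ (P x)‖ ≤ ε/4 := by
      calc ‖g₀ y - g₀ (P x)‖ = ‖g₀ (y - P x)‖ := by rw [map_sub]
        _ ≤ ‖g₀‖ * ‖y - P x‖ := g₀.le_opNorm _
        _ ≤ M' * δ := by
            apply mul_le_mul (hM'le _ (hg p hpmem)) ?_ (norm_nonneg _) hM'pos.le
            rw [← dist_eq_norm, dist_comm]; exact hd
        _ = ε/4 := by rw [hδdef]; field_simp
    have h2 : ‖f y - g₀ y‖ ≤ ε/4 := by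
      have := hpball
      rw [Metric.mem_ball] at this
      have hdy : dist (Φ f ⟨y, hyF⟩) (p ⟨y, hyF⟩) < ε/4 := by
        refine lt_of_le_of_lt ?_ this
        exact dist_le_pi_dist (Φ f) p ⟨y, hyF⟩
      have hpy : p ⟨y, hyF⟩ = Φ g₀ ⟨y, hyF⟩ := by rw [← hΦg p hpmem]
      rw [hpy] at hdy
      simpa [hΦdef, Real.dist_eq, abs_sub_comm] using hdy.le
    calc ‖(f.comp P - g₀.comp P) x‖ = ‖(f (P x) - f y) + (f y - g₀ y) + (g₀ y - g₀ (P x))‖ := by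
          simp only [ContinuousLinearMap.sub_apply, ContinuousLinearMap.comp_apply]
          ring_nf
      _ ≤ ‖f (P x) - f y‖ + ‖f y - g₀ y‖ + ‖g₀ y - g₀ (P x)‖ :=
          (norm_add_le _ _).trans (by gcongr; exact norm_add_le _ _)
      _ ≤ ε/4 + ε/4 + ε/4 := by gcongr
      _ = 3 * (ε/4) := by ring
  calc ‖f.comp P - g₀.comp P‖ ≤ 3 * (ε/4) := key
    _ < ε := by linarith
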